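/- The second term in the Nédélec space definition can be characterized as homogeneous polynomials orthogonal to the position vector: a homogeneous polynomial vector field v of degree q+1 satisfies x · v(x) = 0 for all x if and only if v = x × w for some polynomial vector field w of degree q. -/

import Mathlib

open MvPolynomial

/-- Cross product of polynomial vector fields on `ℝ³`. -/
noncomputable def pcross (u v : Fin 3 → MvPolynomial (Fin 3) ℝ) :
    Fin 3 → MvPolynomial (Fin 3) ℝ :=
  ![u 1 * v 2 - u 2 * v 1, u 2 * v 0 - u 0 * v 2, u 0 * v 1 - u 1 * v 0]

/-- The position vector field `x` on `ℝ³`. -/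
noncomputable def posX : Fin 3 → MvPolynomial (Fin 3) ℝ := fun i => X i

lemma X_mul_pderiv_monomial (i : Fin 3) (s : Fin 3 →₀ ℕ) (a : ℝ) :
    X i * pderiv i (monomial s a) = (s i : ℝ) • monomial s a := by
  rw [pderiv_monomial]
  rcases Nat.eq_zero_or_pos (s i) with h | h
  · simp [h]
  · have hle : Finsupp.single i 1 ≤ s := by rwa [Finsupp.single_le_iff]
    rw [X, monomial_mul, smul_monomial]
    congr 1
    · rw [add_comm, tsub_add_cancel_of_le hle]
    · rw [one_mul, smul_eq_mul]; ring

lemma euler3 {n : ℕ} {p : MvPolynomial (Fin 3) ℝ} (hp : p.IsHomogeneous n) :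
    ∑ i : Fin 3, X i * pderiv i p = (n : ℝ) • p := by
  conv_lhs => rw [p.as_sum]
  simp only [map_sum, Finset.mul_sum]
  rw [Finset.sum_comm]
  conv_rhs => rw [p.as_sum, Finset.smul_sum]
  refine Finset.sum_congr rfl fun d hd => ?_
  simp only [X_mul_pderiv_monomial, ← Finset.sum_smul]
  congr 1
  have hdeg : (Finsupp.weight 1) d = n := hp (mem_support_iff.mp hd)
  have : ∑ i : Fin 3, d i = n := by
    rw [← hdeg, show (Finsupp.weight 1 : (Fin 3 →₀ ℕ) →+ ℕ) = Finsupp.weight (fun _ => 1) from rfl,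
      ← Finsupp.degree_eq_weight_one, Finsupp.degree_apply,
      Finset.sum_subset (Finset.subset_univ d.support)
      (fun x _ hx => Finsupp.notMem_support_iff.mp hx)]
  rw [← this]; push_cast; ring

lemma pderiv_isHomogeneous {n : ℕ} {p : MvPolynomial (Fin 3) ℝ}
    (hp : p.IsHomogeneous (n + 1)) (i : Fin 3) : (pderiv i p).IsHomogeneous n := by
  conv_lhs => rw [p.as_sum]
  rw [map_sum]
  refine MvPolynomial.IsHomogeneous.sum p.support
    (fun d => pderiv i (monomial d (coeff d p))) n fun d hd => ?_
  simp only [pderiv_monomial]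
  rcases Nat.eq_zero_or_pos (d i) with h | h
  · simp only [h, Nat.cast_zero, mul_zero, monomial_zero]
    exact isHomogeneous_zero (σ := Fin 3) (R := ℝ) n
  · refine isHomogeneous_monomial _ ?_
    have hle : Finsupp.single i 1 ≤ d := by rwa [Finsupp.single_le_iff]
    have hdeg : d.degree = n + 1 := by
      rw [Finsupp.degree_eq_weight_one]; exact hp (mem_support_iff.mp hd)
    have hadd : (d - Finsupp.single i 1) + Finsupp.single i 1 = d :=
      tsub_add_cancel_of_le hle
    have : (d - Finsupp.single i 1).degree + (Finsupp.single i 1).degree = d.degree := by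
      rw [Finsupp.degree_eq_weight_one, ← map_add, hadd]
    have hsingle : (Finsupp.single i 1).degree = 1 := by
      simp [Finsupp.degree_single]
    omega

/-- A vector field `v` with homogeneous polynomial components of degree `q+1` satisfies
`x · v(x) = 0` for all `x ∈ ℝ³` if and only if `v = x × w` for some polynomial vector
field `w` of degree at most `q`. -/
theorem homogeneous_orth_iff_cross (q : ℕ) (v : Fin 3 → MvPolynomial (Fin 3) ℝ)
    (hv : ∀ i, (v i).IsHomogeneous (q + 1)) :
    (∀ x : Fin 3 → ℝ, ∑ i, x i * eval x (v i) = 0) ↔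
      ∃ w : Fin 3 → MvPolynomial (Fin 3) ℝ,
        (∀ i, (w i).totalDegree ≤ q) ∧ ∀ i, v i = pcross posX w i := by
  constructor
  · intro h
    -- The polynomial identity x · v = 0
    have hP : (X 0 * v 0 + X 1 * v 1 + X 2 * v 2 : MvPolynomial (Fin 3) ℝ) = 0 := by
      have := MvPolynomial.funext (p := ∑ i : Fin 3, X i * v i) (q := 0)
        (fun x => by simpa [Fin.sum_univ_three] using h x)
      simpa [Fin.sum_univ_three] using this
    set D : Fin 3 → Fin 3 → MvPolynomial (Fin 3) ℝ := fun k i => pderiv k (v i) with hD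
    -- relations from differentiating hP
    have hR : ∀ k : Fin 3,
        v k + (X 0 * D k 0 + X 1 * D k 1 + X 2 * D k 2) = 0 := by
      intro k
      have h0 := congrArg (pderiv k) hP
      fin_cases k <;>
        simpa [pderiv_mul, hD, add_comm, add_left_comm, add_assoc] using h0
    -- Euler identities
    have hE : ∀ i : Fin 3,
        X 0 * D 0 i + X 1 * D 1 i + X 2 * D 2 i = C ((q : ℝ) + 1) * v i := by
      intro i
      have := euler3 (hv i)
      rw [Fin.sum_univ_three] at this
      rw [this, smul_eq_C_mul]
      push_cast
      ring_nf
    set r : ℝ := (q : ℝ) + 1 with hrdef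
    have hr : (1 : ℝ) + r ≠ 0 := by positivity
    set c : ℝ := -(1 + r)⁻¹ with hcdef
    set curl : Fin 3 → MvPolynomial (Fin 3) ℝ :=
      ![D 1 2 - D 2 1, D 2 0 - D 0 2, D 0 1 - D 1 0] with hcurl
    refine ⟨fun j => c • curl j, ?_, ?_⟩
    · intro j
      have hdeg : ∀ k i : Fin 3, (D k i).totalDegree ≤ q := fun k i =>
        (pderiv_isHomogeneous (hv i) k).totalDegree_le
      have : (curl j).totalDegree ≤ q := by
        fin_cases j <;>
          exact (totalDegree_sub _ _).trans (max_le (hdeg _ _) (hdeg _ _))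
      exact (totalDegree_smul_le _ _).trans this
    · intro i
      have hsmul : ∀ (p : MvPolynomial (Fin 3) ℝ), c • p = C c * p := fun p =>
        smul_eq_C_mul p c
      have hone : (C (c * -(1 + r)) : MvPolynomial (Fin 3) ℝ) = 1 := by
        rw [hcdef]; field_simp; exact map_one _
      fin_cases i
      · have k0 : X 1 * (D 0 1 - D 1 0) - X 2 * (D 2 0 - D 0 2)
            = C (-(1 + r)) * v 0 := by
          have h1 := hR 0
          have h2 := hE 0
          have hC : (C (-(1 + r)) : MvPolynomial (Fin 3) ℝ) = -1 - C r := by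
            rw [map_neg, map_add, map_one]; ring
          rw [hC]; linear_combination h1 - h2
        show v 0 = pcross posX (fun j => c • curl j) 0
        simp only [pcross, posX, hcurl, Matrix.cons_val_zero, Matrix.cons_val_one,
          Matrix.head_cons, Matrix.cons_val_two, Matrix.tail_cons]
        rw [hsmul, hsmul]
        calc v 0 = C (c * -(1 + r)) * v 0 := by rw [hone, one_mul]
          _ = C c * (C (-(1 + r)) * v 0) := by rw [map_mul, mul_assoc]
          _ = _ := by rw [← k0]; ring
      · have k0 : X 2 * (D 1 2 - D 2 1) - X 0 * (D 0 1 - D 1 0)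
            = C (-(1 + r)) * v 1 := by
          have h1 := hR 1
          have h2 := hE 1
          have hC : (C (-(1 + r)) : MvPolynomial (Fin 3) ℝ) = -1 - C r := by
            rw [map_neg, map_add, map_one]; ring
          rw [hC]; linear_combination h1 - h2
        show v 1 = pcross posX (fun j => c • curl j) 1
        simp only [pcross, posX, hcurl, Matrix.cons_val_zero, Matrix.cons_val_one,
          Matrix.head_cons, Matrix.cons_val_two, Matrix.tail_cons]
        rw [hsmul, hsmul]
        calc v 1 = C (c * -(1 + r)) * v 1 := by rw [hone, one_mul]
          _ = C c * (C (-(1 + r)) * v 1) := by rw [map_mul, mul_assoc]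
          _ = _ := by rw [← k0]; ring
      · have k0 : X 0 * (D 2 0 - D 0 2) - X 1 * (D 1 2 - D 2 1)
            = C (-(1 + r)) * v 2 := by
          have h1 := hR 2
          have h2 := hE 2
          have hC : (C (-(1 + r)) : MvPolynomial (Fin 3) ℝ) = -1 - C r := by
            rw [map_neg, map_add, map_one]; ring
          rw [hC]; linear_combination h1 - h2
        show v 2 = pcross posX (fun j => c • curl j) 2
        simp only [pcross, posX, hcurl, Matrix.cons_val_zero, Matrix.cons_val_one,
          Matrix.head_cons, Matrix.cons_val_two, Matrix.tail_cons]
        rw [hsmul, hsmul]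
        calc v 2 = C (c * -(1 + r)) * v 2 := by rw [hone, one_mul]
          _ = C c * (C (-(1 + r)) * v 2) := by rw [map_mul, mul_assoc]
          _ = _ := by rw [← k0]; ring
  · rintro ⟨w, _, hw⟩ x
    rw [Fin.sum_univ_three, hw 0, hw 1, hw 2]
    simp only [pcross, posX, Matrix.cons_val_zero, Matrix.cons_val_one, Matrix.head_cons,
      Matrix.cons_val_two, Matrix.tail_cons, map_sub, map_mul, eval_X]
    ring
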